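/- Let Γ be a group, ℂ[Γ] its group algebra, and ε : ℂ[Γ] → ℂ the augmentation homomorphism. The following are equivalent: (i) K_∞ = K₁, i.e. the intersection ⋂_{n≥1} (ker ε)ⁿ equals ker ε; (ii) K₂ = K₁, i.e. (ker ε)² = ker ε; (iii) the abelianization of Γ is a torsion group (every element of Γ/[Γ,Γ] has finite order). -/

import Mathlib

section KinfAux

variable {Γ : Type*} [Group Γ] (ε : MonoidAlgebra ℂ Γ →ₐ[ℂ] ℂ)
  (hε : ∀ x : Γ, ε (MonoidAlgebra.of ℂ Γ x) = 1)

include hε in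
theorem Kinf_aux_single (g : Γ) (c : ℂ) : ε (MonoidAlgebra.single g c) = c := by
  have : MonoidAlgebra.single g c = c • MonoidAlgebra.of ℂ Γ g := by
    simp [MonoidAlgebra.of_apply, MonoidAlgebra.smul_single']
  rw [this, map_smul, hε, smul_eq_mul, mul_one]

include hε in
theorem Kinf_aux_mem (g : Γ) :
    (MonoidAlgebra.of ℂ Γ g - 1) ∈ LinearMap.ker ε.toLinearMap := by
  have h := hε g
  simp only [LinearMap.mem_ker, AlgHom.toLinearMap_apply, map_sub, map_one, h, sub_self]

include hε in
theorem Kinf_aux_span (x : MonoidAlgebra ℂ Γ) (hx : x ∈ LinearMap.ker ε.toLinearMap) :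
    x ∈ Submodule.span ℂ {y | ∃ g : Γ, y = MonoidAlgebra.of ℂ Γ g - 1} := by
  have hxe : ε x = 0 := hx
  have h1 : ∑ g ∈ x.coeff.support, (x.coeff g) • (MonoidAlgebra.of ℂ Γ g) = x := by
    conv_rhs => rw [← MonoidAlgebra.sum_coeff_single x, Finsupp.sum]
    refine Finset.sum_congr rfl fun g _ => ?_
    simp [MonoidAlgebra.of_apply, MonoidAlgebra.smul_single']
  have h2 : ∑ g ∈ x.coeff.support, x.coeff g = 0 := by
    have h3 : ε x = ∑ g ∈ x.coeff.support, x.coeff g := by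
      conv_lhs => rw [← MonoidAlgebra.sum_coeff_single x, Finsupp.sum]
      rw [map_sum]
      exact Finset.sum_congr rfl fun g _ => Kinf_aux_single ε hε g (x.coeff g)
    rw [← h3]; exact hxe
  have key : x = ∑ g ∈ x.coeff.support, (x.coeff g) • (MonoidAlgebra.of ℂ Γ g - 1) := by
    rw [Finset.sum_congr rfl (fun g _ => smul_sub (x.coeff g) _ 1),
      Finset.sum_sub_distrib, h1, ← Finset.sum_smul, h2, zero_smul, sub_zero]
  rw [key]
  exact Submodule.sum_mem _ fun g _ => Submodule.smul_mem _ _ (Submodule.subset_span ⟨g, rfl⟩)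

include hε in
theorem Kinf_aux_elem (htor : ∀ x : Abelianization Γ, IsOfFinOrder x) (g : Γ) :
    (MonoidAlgebra.of ℂ Γ g - 1) ∈ (LinearMap.ker ε.toLinearMap) ^ 2 := by
  set K := LinearMap.ker ε.toLinearMap with hK
  set mkQ := (K ^ 2).mkQ with hmkQ
  have hmul : ∀ a b : Γ, mkQ (MonoidAlgebra.of ℂ Γ (a * b) - 1)
      = mkQ (MonoidAlgebra.of ℂ Γ a - 1) + mkQ (MonoidAlgebra.of ℂ Γ b - 1) := by
    intro a b
    rw [← map_add, ← sub_eq_zero, ← map_sub, Submodule.mkQ_apply,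
      Submodule.Quotient.mk_eq_zero]
    have hprod : (MonoidAlgebra.of ℂ Γ a - 1) * (MonoidAlgebra.of ℂ Γ b - 1) ∈ K ^ 2 := by
      rw [pow_two]
      exact Submodule.mul_mem_mul (Kinf_aux_mem ε hε a) (Kinf_aux_mem ε hε b)
    have : MonoidAlgebra.of ℂ Γ (a * b) - 1 -
        ((MonoidAlgebra.of ℂ Γ a - 1) + (MonoidAlgebra.of ℂ Γ b - 1))
        = (MonoidAlgebra.of ℂ Γ a - 1) * (MonoidAlgebra.of ℂ Γ b - 1) := by
      rw [map_mul]; noncomm_ring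
    rw [this]; exact hprod
  let d : Γ →* Multiplicative (MonoidAlgebra ℂ Γ ⧸ K ^ 2) :=
    { toFun := fun a => Multiplicative.ofAdd (mkQ (MonoidAlgebra.of ℂ Γ a - 1))
      map_one' := by
        show Multiplicative.ofAdd (mkQ (MonoidAlgebra.of ℂ Γ 1 - 1)) = 1
        rw [map_one, sub_self, map_zero]; rfl
      map_mul' := fun a b => by
        simp only [hmul a b]; rfl }
  let D := Abelianization.lift d
  obtain ⟨n, hn, hxn⟩ := isOfFinOrder_iff_pow_eq_one.mp (htor (Abelianization.of g))
  have h1 : (D (Abelianization.of g)) ^ n = 1 := by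
    rw [← map_pow, hxn, map_one]
  have h2 : D (Abelianization.of g) = d g := Abelianization.lift_apply_of (f := d) g
  have h3 : n • (mkQ (MonoidAlgebra.of ℂ Γ g - 1)) = 0 := by
    have := h1
    rw [h2] at this
    exact this
  have h4 : (n : ℂ) • (mkQ (MonoidAlgebra.of ℂ Γ g - 1)) = 0 := by
    rw [Nat.cast_smul_eq_nsmul]; exact h3
  have h5 : mkQ (MonoidAlgebra.of ℂ Γ g - 1) = 0 := by
    rcases smul_eq_zero.mp h4 with h | h
    · exact absurd h (by exact_mod_cast hn.ne')
    · exact h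
  rwa [Submodule.mkQ_apply, Submodule.Quotient.mk_eq_zero] at h5

include hε in
theorem Kinf_aux_tor (h2 : (LinearMap.ker ε.toLinearMap) ^ 2 = LinearMap.ker ε.toLinearMap) :
    ∀ x : Abelianization Γ, IsOfFinOrder x := by
  have hε' : ∀ (g : Γ) (c : ℂ), ε (MonoidAlgebra.single g c) = c := Kinf_aux_single ε hε
  by_contra hcon
  push_neg at hcon
  obtain ⟨x, hx⟩ := hcon
  obtain ⟨g₀, rfl⟩ : ∃ g : Γ, Abelianization.of g = x := by
    obtain ⟨g, hg⟩ := Quot.exists_rep x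
    exact ⟨g, hg⟩
  set A := Additive (Abelianization Γ)
  set a : A := Additive.ofMul (Abelianization.of g₀)
  have hinj : Function.Injective (fun n : ℤ => n • a) := by
    have := injective_zpow_iff_not_isOfFinOrder.mpr hx
    intro m n hmn
    apply this
    exact hmn
  let i : ℤ →+ A :=
    { toFun := fun n => n • a
      map_zero' := by simp
      map_add' := fun m n => by simp [add_zsmul] }
  obtain ⟨F, hF⟩ := (Module.Baer.of_divisible ℚ).extension_property_addMonoidHom i hinj
    (Int.castAddHom ℚ)
  set v : Γ → ℂ := fun g => ((F (Additive.ofMul (Abelianization.of g)) : ℚ) : ℂ) with hv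
  set φ : MonoidAlgebra ℂ Γ →ₗ[ℂ] ℂ := Finsupp.linearCombination ℂ v ∘ₗ (MonoidAlgebra.coeffLinearEquiv ℂ).toLinearMap with hφ
  have hφ_single : ∀ (g : Γ) (c : ℂ), φ (MonoidAlgebra.single g c) = c * v g := by
    intro g c
    rw [hφ]
    exact (Finsupp.linearCombination_single ℂ (v := v) c g).trans (smul_eq_mul ..)
  have hv_mul : ∀ g h : Γ, v (g * h) = v g + v h := by
    intro g h
    simp only [hv, map_mul]
    rw [show Additive.ofMul (Abelianization.of g * Abelianization.of h)
      = Additive.ofMul (Abelianization.of g) + Additive.ofMul (Abelianization.of h) from rfl,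
      map_add]
    push_cast
    ring
  have hder : ∀ x y : MonoidAlgebra ℂ Γ, φ (x * y) = ε x * φ y + ε y * φ x := by
    intro x y
    induction x using MonoidAlgebra.induction_linear with
    | zero => simp
    | add p q hp hq =>
      rw [add_mul, map_add, map_add, map_add, hp, hq]; ring
    | single gx cx =>
      induction y using MonoidAlgebra.induction_linear with
      | zero => simp
      | add p q hp hq =>
        rw [mul_add, map_add, map_add, map_add, hp, hq]; ring
      | single gy cy =>
        rw [show (MonoidAlgebra.single gx cx : MonoidAlgebra ℂ Γ) * MonoidAlgebra.single gy cy
          = MonoidAlgebra.single (gx * gy) (cx * cy) from MonoidAlgebra.single_mul_single _ _ _ _,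
          hφ_single, hφ_single, hφ_single, hε', hε', hv_mul]
        ring
  have hker : (LinearMap.ker ε.toLinearMap) ^ 2 ≤ LinearMap.ker φ := by
    rw [pow_two]
    refine Submodule.mul_le.mpr fun m hm n hn => ?_
    have hm' : ε m = 0 := hm
    have hn' : ε n = 0 := hn
    simp [LinearMap.mem_ker, hder, hm', hn']
  have hmem : (MonoidAlgebra.of ℂ Γ g₀ - 1) ∈ LinearMap.ker ε.toLinearMap :=
    Kinf_aux_mem ε hε g₀
  have h0 : φ (MonoidAlgebra.of ℂ Γ g₀ - 1) = 0 := hker (by rw [h2]; exact hmem)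
  have hφof : φ (MonoidAlgebra.of ℂ Γ g₀) = v g₀ := by
    rw [MonoidAlgebra.of_apply, hφ_single, one_mul]
  have hφone : φ (1 : MonoidAlgebra ℂ Γ) = 0 := by
    rw [show (1 : MonoidAlgebra ℂ Γ) = MonoidAlgebra.single 1 1 from rfl, hφ_single, one_mul]
    simp [hv]
  rw [map_sub, hφof, hφone, sub_zero] at h0
  have hFa : F a = 1 := by
    have := DFunLike.congr_fun hF (1 : ℤ)
    simpa [i] using this
  rw [hv] at h0
  simp only [hFa] at h0
  norm_num at h0
  exact one_ne_zero (hFa.symm.trans h0)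

end KinfAux

/-- For a group `Γ` with group algebra `ℂ[Γ]` and augmentation `ε`, the
following are equivalent: `K_∞ = K₁`, `K₂ = K₁`, and the abelianization of `Γ`
is a torsion group. -/
theorem Kinf_eq_K1_iff_abelianization_torsion
    {Γ : Type*} [Group Γ]
    (ε : MonoidAlgebra ℂ Γ →ₐ[ℂ] ℂ)
    (hε : ∀ x : Γ, ε (MonoidAlgebra.of ℂ Γ x) = 1) :
    List.TFAE
      [ (⨅ n : ℕ, (LinearMap.ker ε.toLinearMap) ^ (n + 1))
          = LinearMap.ker ε.toLinearMap,
        (LinearMap.ker ε.toLinearMap) ^ 2 = LinearMap.ker ε.toLinearMap,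
        ∀ x : Abelianization Γ, IsOfFinOrder x ] := by
  set K := LinearMap.ker ε.toLinearMap with hK
  have hKK : K * K ≤ K := by
    refine Submodule.mul_le.mpr fun m hm n hn => ?_
    have hm' : ε m = 0 := hm
    have hn' : ε n = 0 := hn
    show ε (m * n) = 0
    rw [map_mul, hm', zero_mul]
  tfae_have 1 → 2 := by
    intro h1
    refine le_antisymm ?_ ?_
    · rw [pow_two]; exact hKK
    · calc K = ⨅ n : ℕ, K ^ (n + 1) := h1.symm
        _ ≤ K ^ (1 + 1) := iInf_le _ 1
  tfae_have 2 → 1 := by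
    intro h2
    have hall : ∀ n : ℕ, K ^ (n + 1) = K := by
      intro n
      induction n with
      | zero => exact pow_one K
      | succ n ih => rw [pow_succ, ih, ← pow_two, h2]
    simp only [hall, iInf_const]
  tfae_have 2 → 3 := Kinf_aux_tor ε hε
  tfae_have 3 → 2 := by
    intro htor
    refine le_antisymm ?_ ?_
    · rw [pow_two]; exact hKK
    · intro x hx
      have hsp := Kinf_aux_span ε hε x hx
      refine Submodule.span_le.mpr ?_ hsp
      rintro y ⟨g, rfl⟩
      exact Kinf_aux_elem ε hε htor g
  tfae_finish
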